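/- arXiv:1909.04710 — 2 statements merged into one kernel-verified Lean document; each statement's English description precedes it below -/
import Mathlib

section
/- Let Σ → G be a twist over an étale groupoid G equipped with continuous cocycles c_Σ : Σ → Γ and c_G : G → Γ into a discrete abelian group Γ making the grading diagram commute. Then there is a strongly continuous action of the dual group Ĝ = Γ̂ on C*_r(Σ;G) characterized on C_c(Σ;G) by (ω·f)(γ̇) = ⟨ω, c_G(γ̇)⟩ f(γ̇), and each ω acts isometrically for the reduced norm. -/
open scoped ComplexConjugate
open Filter Topology

noncomputable section

/-- A (Hausdorff) topological groupoid, presented with everywhere-defined structure maps: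
`comp g h` is only meaningful when `src g = rng h`. -/
structure TopGroupoidData (G : Type*) [TopologicalSpace G] where
  src : G → G
  rng : G → G
  comp : G → G → G
  inv : G → G
  src_src : ∀ g, src (src g) = src g
  rng_src : ∀ g, rng (src g) = src g
  src_rng : ∀ g, src (rng g) = rng g
  comp_assoc : ∀ g h k, src g = rng h → src h = rng k →
    comp (comp g h) k = comp g (comp h k)
  src_comp : ∀ g h, src g = rng h → src (comp g h) = src h
  rng_comp : ∀ g h, src g = rng h → rng (comp g h) = rng g
  comp_src : ∀ g, comp g (src g) = g
  rng_comp_self : ∀ g, comp (rng g) g = g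
  inv_inv : ∀ g, inv (inv g) = g
  src_inv : ∀ g, src (inv g) = rng g
  comp_inv : ∀ g, comp g (inv g) = rng g
  inv_comp : ∀ g, comp (inv g) g = src g
  continuous_src : Continuous src
  continuous_rng : Continuous rng
  continuous_inv : Continuous inv
  continuous_comp : Continuous fun p : {p : G × G // src p.1 = rng p.2} => comp p.1.1 p.1.2

namespace TopGroupoidData

variable {G : Type*} [TopologicalSpace G]

/-- The unit space `G⁽⁰⁾`. -/
def units (Gd : TopGroupoidData G) : Set G := Set.range Gd.src

/-- `G` is étale: every point has an open bisection neighbourhood on which `src` and `rng`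
are open injections. -/
def IsEtale (Gd : TopGroupoidData G) : Prop :=
  ∀ g : G, ∃ U : Set G, IsOpen U ∧ g ∈ U ∧ Set.InjOn Gd.src U ∧ Set.InjOn Gd.rng U ∧
    ∀ V ⊆ U, IsOpen V → IsOpen (Gd.src '' V) ∧ IsOpen (Gd.rng '' V)

end TopGroupoidData

/-- A twist `𝕋 × G⁽⁰⁾ → Σ → G`: a locally trivial central extension of the topological
groupoid `G` by the circle, together with a chosen (set-theoretic) section `lift` of `q`
and the resulting `𝕋`-valued cocycle `cocyc`. -/
structure TwistData (G S : Type*) [TopologicalSpace G] [TopologicalSpace S] where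
  Gd : TopGroupoidData G
  Sd : TopGroupoidData S
  q : S → G
  q_surj : Function.Surjective q
  q_cont : Continuous q
  q_src : ∀ σ, q (Sd.src σ) = Gd.src (q σ)
  q_rng : ∀ σ, q (Sd.rng σ) = Gd.rng (q σ)
  q_comp : ∀ σ τ, Sd.src σ = Sd.rng τ → q (Sd.comp σ τ) = Gd.comp (q σ) (q τ)
  q_inv : ∀ σ, q (Sd.inv σ) = Gd.inv (q σ)
  q_unit_bij : Set.BijOn q Sd.units Gd.units
  act : Circle → S → S
  act_one : ∀ σ, act 1 σ = σ
  act_mul : ∀ z w σ, act z (act w σ) = act (z * w) σ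
  act_cont : Continuous fun p : Circle × S => act p.1 p.2
  act_free : ∀ z σ, act z σ = σ → z = 1
  act_fiber : ∀ σ τ, q σ = q τ → ∃ z, τ = act z σ
  q_act : ∀ z σ, q (act z σ) = q σ
  act_central : ∀ z σ τ, Sd.src σ = Sd.rng τ →
    Sd.comp (act z σ) τ = act z (Sd.comp σ τ) ∧ Sd.comp σ (act z τ) = act z (Sd.comp σ τ)
  loc_triv : ∀ g : G, ∃ (U : Set G) (φ : G → S), IsOpen U ∧ g ∈ U ∧
    ContinuousOn φ U ∧ ∀ h ∈ U, q (φ h) = h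
  lift : G → S
  q_lift : ∀ g, q (lift g) = g
  cocyc : G → G → Circle
  lift_comp : ∀ g h, Gd.src g = Gd.rng h →
    Sd.comp (lift g) (lift h) = act (cocyc g h) (lift (Gd.comp g h))

namespace TwistData

variable {G S : Type*} [TopologicalSpace G] [TopologicalSpace S]

/-- A function `f : Σ → ℂ` is covariant when `f(z·γ) = z̄ f(γ)`. -/
def IsCovariant (T : TwistData G S) (f : S → ℂ) : Prop :=
  ∀ (z : Circle) (σ : S), f (T.act z σ) = conj (z : ℂ) * f σ

/-- Membership in `C_c(Σ;G)`: continuous, compactly supported, covariant functions. -/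
def MemCc (T : TwistData G S) (f : S → ℂ) : Prop :=
  Continuous f ∧ HasCompactSupport f ∧ T.IsCovariant f

/-- The convolution product on `C_c(Σ;G)`:
`(f * g)(γ) = ∑_{r(η̇) = r(γ̇)} f(η) g(η⁻¹ γ)`, with one lift `η` chosen for each `η̇ ∈ G`. -/
def conv (T : TwistData G S) (f g : S → ℂ) : S → ℂ :=
  fun σ => ∑' η : {h : G // T.Gd.rng h = T.Gd.rng (T.q σ)},
    f (T.lift η.1) * g (T.Sd.comp (T.Sd.inv (T.lift η.1)) σ)

/-- The involution on `C_c(Σ;G)`: `f*(γ) = conj (f (γ⁻¹))`. -/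
def starF (T : TwistData G S) (f : S → ℂ) : S → ℂ :=
  fun σ => conj (f (T.Sd.inv σ))

/-- The regular representation `π_x` at a unit `x`, acting on (the trivialization via `lift` of)
square-summable sections over `Gx`. -/
def pix (T : TwistData G S) (x : G) (f : S → ℂ)
    (χ : {g : G // T.Gd.src g = x} → ℂ) : {g : G // T.Gd.src g = x} → ℂ :=
  fun γ => ∑' η : {g : G // T.Gd.src g = x},
    f (T.lift (T.Gd.comp γ.1 (T.Gd.inv η.1))) *
      ((T.cocyc (T.Gd.comp γ.1 (T.Gd.inv η.1)) η.1 : ℂ)) * χ η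

/-- The `ℓ²`-norm of a section over `Gx`. -/
def l2norm (T : TwistData G S) (x : G)
    (χ : {g : G // T.Gd.src g = x} → ℂ) : ℝ :=
  Real.sqrt (∑' γ : {g : G // T.Gd.src g = x}, ‖χ γ‖ ^ 2)

/-- The reduced norm `‖f‖ᵣ = sup_{x ∈ G⁽⁰⁾} ‖π_x(f)‖`. -/
def rnorm (T : TwistData G S) (f : S → ℂ) : ℝ :=
  ⨆ x : G, ⨆ _ : x ∈ T.Gd.units, ⨆ χ : {g : G // T.Gd.src g = x} → ℂ,
    ⨆ _ : (Function.support χ).Finite ∧ T.l2norm x χ ≤ 1, T.l2norm x (T.pix x f χ)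

end TwistData

section Aux

variable {G S : Type*} [TopologicalSpace G] [TopologicalSpace S]

namespace TopGroupoidData

lemma rng_inv (Gd : TopGroupoidData G) (g : G) : Gd.rng (Gd.inv g) = Gd.src g := by
  rw [← Gd.src_inv (Gd.inv g), Gd.inv_inv]

/-- From étaleness: fibers of `src` and `rng` over a compact set have uniformly bounded
finite cardinality. -/
lemma exists_finset_fiber_bound (Gd : TopGroupoidData G) (h : Gd.IsEtale)
    {K : Set G} (hK : IsCompact K) :
    ∃ n : ℕ, (∀ u : G, ∃ t : Finset G, {m | m ∈ K ∧ Gd.src m = u} ⊆ ↑t ∧ t.card ≤ n)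
      ∧ (∀ u : G, ∃ t : Finset G, {m | m ∈ K ∧ Gd.rng m = u} ⊆ ↑t ∧ t.card ≤ n) := by
  classical
  choose U hUopen hUmem hUsrc hUrng _ using h
  obtain ⟨t, ht⟩ := hK.elim_finite_subcover (fun g : G => U g) (fun g => hUopen g)
    (fun m hm => Set.mem_iUnion.2 ⟨m, hUmem m⟩)
  have main : ∀ F : G → G, (∀ g, Set.InjOn F (U g)) → ∀ u : G,
      ∃ tt : Finset G, {m | m ∈ K ∧ F m = u} ⊆ ↑tt ∧ tt.card ≤ t.card := by
    intro F hF u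
    set A := {m | m ∈ K ∧ F m = u} with hA
    have hpick : ∀ m : A, ∃ i, i ∈ t ∧ (m : G) ∈ U i := by
      intro m
      have := ht m.2.1
      simpa using this
    choose φ hφt hφU using hpick
    have hinj : Function.Injective fun m : A => (⟨φ m, hφt m⟩ : {i // i ∈ t}) := by
      intro m₁ m₂ hmm
      have hi : φ m₁ = φ m₂ := congrArg Subtype.val hmm
      apply Subtype.ext
      apply hF (φ m₁) (hφU m₁) (hi ▸ hφU m₂)
      rw [m₁.2.2, m₂.2.2]
    have hfinA' : Finite A := Finite.of_injective _ hinj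
    have hfinA : A.Finite := Set.finite_coe_iff.mp hfinA'
    refine ⟨hfinA.toFinset, by simp [hfinA.coe_toFinset], ?_⟩
    have h1 : hfinA.toFinset.card = Nat.card A :=
      (Nat.card_eq_card_finite_toFinset hfinA).symm
    have h2 : Nat.card A ≤ Nat.card {i // i ∈ t} := Nat.card_le_card_of_injective _ hinj
    have h3 : Nat.card {i // i ∈ t} = t.card := Nat.card_eq_finsetCard t
    omega
  exact ⟨t.card, main Gd.src hUsrc, main Gd.rng hUrng⟩

end TopGroupoidData

end Aux
section Aux2

variable {G S : Type*} [TopologicalSpace G] [TopologicalSpace S]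

namespace TwistData

lemma l2norm_nonneg (T : TwistData G S) (x : G) (χ : {g : G // T.Gd.src g = x} → ℂ) :
    0 ≤ T.l2norm x χ := Real.sqrt_nonneg _

lemma rnorm_nonneg (T : TwistData G S) (f : S → ℂ) : 0 ≤ T.rnorm f :=
  Real.iSup_nonneg fun _ => Real.iSup_nonneg fun _ => Real.iSup_nonneg fun _ =>
    Real.iSup_nonneg fun _ => T.l2norm_nonneg _ _

/-- Schur-test bound for the regular representation. -/
lemma schur (T : TwistData G S) (x : G) (g0 : S → ℂ)
    (χ : {g : G // T.Gd.src g = x} → ℂ)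
    (hχfin : (Function.support χ).Finite) (hχ1 : T.l2norm x χ ≤ 1)
    (K : Set G) (hgK : ∀ m : G, g0 (T.lift m) ≠ 0 → m ∈ K)
    (n : ℕ) (c : ℝ) (hc : ∀ σ, ‖g0 σ‖ ≤ c) (hc0 : 0 ≤ c)
    (hsrc : ∀ u : G, ∃ t : Finset G, {m | m ∈ K ∧ T.Gd.src m = u} ⊆ ↑t ∧ t.card ≤ n)
    (hrng : ∀ u : G, ∃ t : Finset G, {m | m ∈ K ∧ T.Gd.rng m = u} ⊆ ↑t ∧ t.card ≤ n) :
    T.l2norm x (T.pix x g0 χ) ≤ (n : ℝ) * c := by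
  classical
  have hnc0 : 0 ≤ (n : ℝ) * c := mul_nonneg (Nat.cast_nonneg n) hc0
  have hIdef : True := trivial
  set k : {g : G // T.Gd.src g = x} → {g : G // T.Gd.src g = x} → ℂ := fun γ η =>
    g0 (T.lift (T.Gd.comp γ.1 (T.Gd.inv η.1))) *
      (T.cocyc (T.Gd.comp γ.1 (T.Gd.inv η.1)) η.1 : ℂ) with hk
  have hsrcrnginv : ∀ γ η : {g : G // T.Gd.src g = x}, T.Gd.src γ.1 = T.Gd.rng (T.Gd.inv η.1) := by
    intro γ η; rw [γ.2, T.Gd.rng_inv, η.2]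
  have hnormk : ∀ γ η : {g : G // T.Gd.src g = x}, ‖k γ η‖ = ‖g0 (T.lift (T.Gd.comp γ.1 (T.Gd.inv η.1)))‖ := by
    intro γ η
    rw [hk]
    simp [norm_mul, Circle.norm_coe]
  have hkK : ∀ γ η : {g : G // T.Gd.src g = x}, k γ η ≠ 0 → T.Gd.comp γ.1 (T.Gd.inv η.1) ∈ K := by
    intro γ η hne
    refine hgK _ fun h0 => hne ?_
    rw [hk]; simp only [h0, zero_mul]
  have hsrc_m : ∀ γ η : {g : G // T.Gd.src g = x}, T.Gd.src (T.Gd.comp γ.1 (T.Gd.inv η.1)) = T.Gd.rng η.1 := by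
    intro γ η
    rw [T.Gd.src_comp _ _ (hsrcrnginv γ η), T.Gd.src_inv]
  have hrng_m : ∀ γ η : {g : G // T.Gd.src g = x}, T.Gd.rng (T.Gd.comp γ.1 (T.Gd.inv η.1)) = T.Gd.rng γ.1 :=
    fun γ η => T.Gd.rng_comp _ _ (hsrcrnginv γ η)
  have hrecover' : ∀ γv ηv : G, T.Gd.src γv = x → T.Gd.src ηv = x →
      T.Gd.comp (T.Gd.comp γv (T.Gd.inv ηv)) ηv = γv := by
    intro γv ηv hγ hη
    rw [T.Gd.comp_assoc _ _ _ (by rw [hγ, T.Gd.rng_inv, hη]) (T.Gd.src_inv ηv),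
      T.Gd.inv_comp, hη, ← hγ, T.Gd.comp_src]
  have hrecover : ∀ γ η : {g : G // T.Gd.src g = x}, T.Gd.comp (T.Gd.comp γ.1 (T.Gd.inv η.1)) η.1 = γ.1 :=
    fun γ η => hrecover' γ.1 η.1 γ.2 η.2
  have hinj_eta : ∀ γ : {g : G // T.Gd.src g = x}, Function.Injective fun η : {g : G // T.Gd.src g = x} => T.Gd.comp γ.1 (T.Gd.inv η.1) := by
    intro γ η₁ η₂ hmm
    have h1' : ∀ γv ηv : G, T.Gd.src γv = x → T.Gd.src ηv = x →
        T.Gd.comp (T.Gd.inv γv) (T.Gd.comp γv (T.Gd.inv ηv)) = T.Gd.inv ηv := by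
      intro γv ηv hγ hη
      rw [← T.Gd.comp_assoc _ _ _ (T.Gd.src_inv γv) (by rw [hγ, T.Gd.rng_inv, hη]),
        T.Gd.inv_comp, hγ, ← hη, ← T.Gd.rng_inv ηv]
      exact T.Gd.rng_comp_self _
    have h2 : T.Gd.inv η₁.1 = T.Gd.inv η₂.1 := by
      rw [← h1' γ.1 η₁.1 γ.2 η₁.2, ← h1' γ.1 η₂.1 γ.2 η₂.2]
      simp only at hmm
      rw [hmm]
    apply Subtype.ext
    rw [← T.Gd.inv_inv η₁.1, h2, T.Gd.inv_inv]
  have hinj_gamma : ∀ η : {g : G // T.Gd.src g = x}, Function.Injective fun γ : {g : G // T.Gd.src g = x} => T.Gd.comp γ.1 (T.Gd.inv η.1) := by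
    intro η γ₁ γ₂ hmm
    apply Subtype.ext
    simp only at hmm
    rw [← hrecover γ₁ η, ← hrecover γ₂ η, hmm]
  set sχ : Finset {g : G // T.Gd.src g = x} := hχfin.toFinset with hsχ
  have hχ0 : ∀ η : {g : G // T.Gd.src g = x}, η ∉ sχ → χ η = 0 := by
    intro η hη
    by_contra h
    exact hη (hχfin.mem_toFinset.mpr h)
  have hpix_eq : ∀ γ : {g : G // T.Gd.src g = x}, T.pix x g0 χ γ = ∑ η ∈ sχ, k γ η * χ η := by
    intro γ
    exact tsum_eq_sum fun η hη => by rw [hχ0 η hη, mul_zero]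
  have hrow : ∀ (γ : {g : G // T.Gd.src g = x}) (s : Finset {g : G // T.Gd.src g = x}), (∑ η ∈ s, ‖k γ η‖) ≤ (n : ℝ) * c := by
    intro γ s
    obtain ⟨t, htsub, htcard⟩ := hrng (T.Gd.rng γ.1)
    have hfilter : (s.filter fun η => ‖k γ η‖ ≠ 0).card ≤ n := by
      refine le_trans (Finset.card_le_card_of_injOn (t := t)
        (fun η => T.Gd.comp γ.1 (T.Gd.inv η.1)) ?_ ((hinj_eta γ).injOn)) ?_
      · intro η hη
        rw [Finset.mem_coe, Finset.mem_filter] at hη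
        have hkne : k γ η ≠ 0 := fun h => hη.2 (by rw [h, norm_zero])
        exact Finset.mem_coe.mp (htsub ⟨hkK γ η hkne, hrng_m γ η⟩)
      · exact htcard
    calc (∑ η ∈ s, ‖k γ η‖)
        = ∑ η ∈ s.filter fun η => ‖k γ η‖ ≠ 0, ‖k γ η‖ := (Finset.sum_filter_ne_zero _).symm
      _ ≤ (s.filter fun η => ‖k γ η‖ ≠ 0).card • c :=
          Finset.sum_le_card_nsmul _ _ c fun η _ => le_trans (le_of_eq (hnormk γ η)) (hc _)
      _ ≤ (n : ℝ) * c := by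
          rw [nsmul_eq_mul]
          exact mul_le_mul_of_nonneg_right (Nat.cast_le.mpr hfilter) hc0
  have hcol : ∀ (η : {g : G // T.Gd.src g = x}) (s : Finset {g : G // T.Gd.src g = x}), (∑ γ ∈ s, ‖k γ η‖) ≤ (n : ℝ) * c := by
    intro η s
    obtain ⟨t, htsub, htcard⟩ := hsrc (T.Gd.rng η.1)
    have hfilter : (s.filter fun γ => ‖k γ η‖ ≠ 0).card ≤ n := by
      refine le_trans (Finset.card_le_card_of_injOn (t := t)
        (fun γ => T.Gd.comp γ.1 (T.Gd.inv η.1)) ?_ ((hinj_gamma η).injOn)) ?_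
      · intro γ hγ
        rw [Finset.mem_coe, Finset.mem_filter] at hγ
        have hkne : k γ η ≠ 0 := fun h => hγ.2 (by rw [h, norm_zero])
        exact Finset.mem_coe.mp (htsub ⟨hkK γ η hkne, hsrc_m γ η⟩)
      · exact htcard
    calc (∑ γ ∈ s, ‖k γ η‖)
        = ∑ γ ∈ s.filter fun γ => ‖k γ η‖ ≠ 0, ‖k γ η‖ := (Finset.sum_filter_ne_zero _).symm
      _ ≤ (s.filter fun γ => ‖k γ η‖ ≠ 0).card • c :=
          Finset.sum_le_card_nsmul _ _ c fun γ _ => le_trans (le_of_eq (hnormk γ η)) (hc _)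
      _ ≤ (n : ℝ) * c := by
          rw [nsmul_eq_mul]
          exact mul_le_mul_of_nonneg_right (Nat.cast_le.mpr hfilter) hc0
  have hA : ∀ γ : {g : G // T.Gd.src g = x}, ‖T.pix x g0 χ γ‖ ≤ ∑ η ∈ sχ, ‖k γ η‖ * ‖χ η‖ := by
    intro γ
    rw [hpix_eq γ]
    refine (norm_sum_le _ _).trans (le_of_eq ?_)
    exact Finset.sum_congr rfl fun η _ => norm_mul _ _
  have hB : ∀ γ : {g : G // T.Gd.src g = x}, ‖T.pix x g0 χ γ‖ ^ 2 ≤ ((n : ℝ) * c) * ∑ η ∈ sχ, ‖k γ η‖ * ‖χ η‖ ^ 2 := by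
    intro γ
    have h1 : ‖T.pix x g0 χ γ‖ ^ 2 ≤ (∑ η ∈ sχ, ‖k γ η‖ * ‖χ η‖) ^ 2 :=
      pow_le_pow_left₀ (norm_nonneg _) (hA γ) 2
    have h2 : (∑ η ∈ sχ, ‖k γ η‖ * ‖χ η‖) ^ 2
        ≤ (∑ η ∈ sχ, ‖k γ η‖) * ∑ η ∈ sχ, ‖k γ η‖ * ‖χ η‖ ^ 2 := by
      have hcs := Finset.sum_mul_sq_le_sq_mul_sq sχ (fun η => Real.sqrt ‖k γ η‖)
        (fun η => Real.sqrt ‖k γ η‖ * ‖χ η‖)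
      have e1 : ∀ η : {g : G // T.Gd.src g = x}, Real.sqrt ‖k γ η‖ * (Real.sqrt ‖k γ η‖ * ‖χ η‖) = ‖k γ η‖ * ‖χ η‖ := by
        intro η; rw [← mul_assoc, Real.mul_self_sqrt (norm_nonneg _)]
      have e2 : ∀ η : {g : G // T.Gd.src g = x}, (Real.sqrt ‖k γ η‖) ^ 2 = ‖k γ η‖ :=
        fun η => Real.sq_sqrt (norm_nonneg _)
      have e3 : ∀ η : {g : G // T.Gd.src g = x}, (Real.sqrt ‖k γ η‖ * ‖χ η‖) ^ 2 = ‖k γ η‖ * ‖χ η‖ ^ 2 := by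
        intro η; rw [mul_pow, e2]
      calc (∑ η ∈ sχ, ‖k γ η‖ * ‖χ η‖) ^ 2
          = (∑ η ∈ sχ, Real.sqrt ‖k γ η‖ * (Real.sqrt ‖k γ η‖ * ‖χ η‖)) ^ 2 := by
            rw [Finset.sum_congr rfl fun η _ => (e1 η).symm]
        _ ≤ (∑ η ∈ sχ, (Real.sqrt ‖k γ η‖) ^ 2) *
              ∑ η ∈ sχ, (Real.sqrt ‖k γ η‖ * ‖χ η‖) ^ 2 := hcs
        _ = (∑ η ∈ sχ, ‖k γ η‖) * ∑ η ∈ sχ, ‖k γ η‖ * ‖χ η‖ ^ 2 := by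
            rw [Finset.sum_congr rfl fun η _ => e2 η, Finset.sum_congr rfl fun η _ => e3 η]
    refine h1.trans (h2.trans ?_)
    refine mul_le_mul_of_nonneg_right (hrow γ sχ) ?_
    exact Finset.sum_nonneg fun η _ => mul_nonneg (norm_nonneg _) (sq_nonneg _)
  -- output support
  choose tS htSsub htScard using hsrc
  set sOut : Finset {g : G // T.Gd.src g = x} :=
    (sχ.biUnion fun η => (tS (T.Gd.rng η.1)).image fun m => T.Gd.comp m η.1).subtype
      fun g => T.Gd.src g = x with hsOut
  have hpix0 : ∀ γ : {g : G // T.Gd.src g = x}, γ ∉ sOut → T.pix x g0 χ γ = 0 := by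
    intro γ hγ
    by_contra hne
    rw [hpix_eq γ] at hne
    obtain ⟨η, hηs, hηne⟩ := Finset.exists_ne_zero_of_sum_ne_zero hne
    apply hγ
    rw [hsOut, Finset.mem_subtype]
    refine Finset.mem_biUnion.2 ⟨η, hηs, ?_⟩
    refine Finset.mem_image.2 ⟨T.Gd.comp γ.1 (T.Gd.inv η.1), ?_, hrecover γ η⟩
    have hkne : k γ η ≠ 0 := left_ne_zero_of_mul hηne
    exact Finset.mem_coe.mp (htSsub (T.Gd.rng η.1) ⟨hkK γ η hkne, hsrc_m γ η⟩)
  have hsum_χ : (∑ η ∈ sχ, ‖χ η‖ ^ 2) ≤ 1 := by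
    have he : (∑' η : {g : G // T.Gd.src g = x}, ‖χ η‖ ^ 2) = ∑ η ∈ sχ, ‖χ η‖ ^ 2 :=
      tsum_eq_sum fun η hη => by rw [hχ0 η hη, norm_zero]; ring
    have h0 : 0 ≤ ∑ η ∈ sχ, ‖χ η‖ ^ 2 := Finset.sum_nonneg fun _ _ => sq_nonneg _
    have hsq : Real.sqrt (∑' η : {g : G // T.Gd.src g = x}, ‖χ η‖ ^ 2) ≤ 1 := hχ1
    have := pow_le_pow_left₀ (Real.sqrt_nonneg _) hsq 2
    rw [Real.sq_sqrt (he ▸ h0), one_pow, he] at this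
    exact this
  have main : (∑' γ : {g : G // T.Gd.src g = x}, ‖T.pix x g0 χ γ‖ ^ 2) ≤ ((n : ℝ) * c) ^ 2 := by
    rw [tsum_eq_sum (s := sOut) fun γ hγ => by rw [hpix0 γ hγ, norm_zero]; ring]
    calc (∑ γ ∈ sOut, ‖T.pix x g0 χ γ‖ ^ 2)
        ≤ ∑ γ ∈ sOut, ((n : ℝ) * c) * ∑ η ∈ sχ, ‖k γ η‖ * ‖χ η‖ ^ 2 :=
          Finset.sum_le_sum fun γ _ => hB γ
      _ = ((n : ℝ) * c) * ∑ η ∈ sχ, (∑ γ ∈ sOut, ‖k γ η‖) * ‖χ η‖ ^ 2 := by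
          rw [← Finset.mul_sum]
          congr 1
          rw [Finset.sum_comm]
          exact Finset.sum_congr rfl fun η _ => (Finset.sum_mul _ _ _).symm
      _ ≤ ((n : ℝ) * c) * ∑ η ∈ sχ, ((n : ℝ) * c) * ‖χ η‖ ^ 2 := by
          refine mul_le_mul_of_nonneg_left ?_ hnc0
          exact Finset.sum_le_sum fun η _ =>
            mul_le_mul_of_nonneg_right (hcol η sOut) (sq_nonneg _)
      _ = ((n : ℝ) * c) * (((n : ℝ) * c) * ∑ η ∈ sχ, ‖χ η‖ ^ 2) := by
          rw [← Finset.mul_sum]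
      _ ≤ ((n : ℝ) * c) * (((n : ℝ) * c) * 1) := by
          exact mul_le_mul_of_nonneg_left
            (mul_le_mul_of_nonneg_left hsum_χ hnc0) hnc0
      _ = ((n : ℝ) * c) ^ 2 := by ring
  show Real.sqrt (∑' γ : {g : G // T.Gd.src g = x}, ‖T.pix x g0 χ γ‖ ^ 2) ≤ (n : ℝ) * c
  calc Real.sqrt (∑' γ : {g : G // T.Gd.src g = x}, ‖T.pix x g0 χ γ‖ ^ 2)
      ≤ Real.sqrt (((n : ℝ) * c) ^ 2) := Real.sqrt_le_sqrt main
    _ = (n : ℝ) * c := Real.sqrt_sq hnc0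

/-- Uniform bound on the reduced norm in terms of a sup-norm bound, for functions
supported in a fixed compact set. -/
lemma rnorm_le_of_bound (T : TwistData G S) (hetale : T.Gd.IsEtale)
    (f : S → ℂ) (hfs : HasCompactSupport f) :
    ∃ n : ℕ, ∀ (g0 : S → ℂ) (c : ℝ), 0 ≤ c → (∀ σ, ‖g0 σ‖ ≤ c) →
      Function.support g0 ⊆ tsupport f → T.rnorm g0 ≤ (n : ℝ) * c := by
  have hKc : IsCompact (T.q '' tsupport f) := hfs.image T.q_cont
  obtain ⟨n, hs, hr⟩ := T.Gd.exists_finset_fiber_bound hetale hKc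
  refine ⟨n, fun g0 c hc0 hc hsupp => ?_⟩
  have hnc0 : 0 ≤ (n : ℝ) * c := mul_nonneg (Nat.cast_nonneg n) hc0
  show (⨆ x : G, ⨆ _ : x ∈ T.Gd.units, ⨆ χ : {g : G // T.Gd.src g = x} → ℂ,
    ⨆ _ : (Function.support χ).Finite ∧ T.l2norm x χ ≤ 1, T.l2norm x (T.pix x g0 χ)) ≤ (n : ℝ) * c
  refine Real.iSup_le (fun x => Real.iSup_le (fun _ => Real.iSup_le (fun χ =>
    Real.iSup_le (fun hP => ?_) hnc0) hnc0) hnc0) hnc0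
  refine T.schur x g0 χ hP.1 hP.2 (T.q '' tsupport f) ?_ n c hc hc0 (hs) (hr)
  intro m hm
  exact ⟨T.lift m, hsupp hm, T.q_lift m⟩

end TwistData

end Aux2
/-- Let `Σ → G` be a twist over an étale groupoid equipped with continuous cocycles `c_Σ : Σ → Γ`, `c_G : G → Γ` into a discrete abelian group `Γ` making the grading diagram commute.  Then there is a strongly continuous action of `Γ̂` on `C*_r(Σ;G)` characterized on `C_c(Σ;G)` by `(ω·f)(γ) = ⟨ω, c_Σ(γ)⟩ f(γ)`, and each `ω` acts isometrically for the reduced norm. -/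
theorem twist_stmt17
    {G S : Type*} [TopologicalSpace G] [TopologicalSpace S]
    [T2Space G] [T2Space S] [LocallyCompactSpace G] [LocallyCompactSpace S]
    (T : TwistData G S) (hetale : T.Gd.IsEtale)
    -- `Γ`-grading cocycles `c_Σ` and `c_G` with `c_Σ = c_G ∘ q`:
    {Γ : Type*} [AddCommGroup Γ] [TopologicalSpace Γ] [DiscreteTopology Γ]
    (cG : G → Γ) (cS : S → Γ)
    (hcG_cont : Continuous cG) (hcS_cont : Continuous cS)
    (hcG_comp : ∀ g h, T.Gd.src g = T.Gd.rng h → cG (T.Gd.comp g h) = cG g + cG h)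
    (hcG_inv : ∀ g, cG (T.Gd.inv g) = - cG g)
    (hcS_q : ∀ σ, cS σ = cG (T.q σ))
 :
    -- the action of a character `ω ∈ Γ̂` on `C_c(Σ;G)`:
    let wact : AddChar Γ Circle → (S → ℂ) → (S → ℂ) :=
      fun ω f σ => ((ω (cS σ) : ℂ)) * f σ
    -- it preserves `C_c(Σ;G)` and is a *-algebra automorphism …
    (∀ ω f, T.MemCc f → T.MemCc (wact ω f)) ∧
    (∀ ω f g, T.MemCc f → T.MemCc g →
      wact ω (T.conv f g) = T.conv (wact ω f) (wact ω g)) ∧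
    (∀ ω f, T.MemCc f → wact ω (T.starF f) = T.starF (wact ω f)) ∧
    -- … defining an action of `Γ̂` …
    (∀ f, wact 1 f = f) ∧
    (∀ ω₁ ω₂ f, wact (ω₁ * ω₂) f = wact ω₁ (wact ω₂ f)) ∧
    --… each `ω` acting isometrically for the reduced norm …
    (∀ ω f, T.MemCc f → T.rnorm (wact ω f) = T.rnorm f) ∧
    -- … and the action is strongly continuous, hence extends to `C*_r(Σ;G)`:
    (∀ f, T.MemCc f → ∀ {ι : Type} (l : Filter ι)
        (w : ι → AddChar Γ Circle) (w₀ : AddChar Γ Circle),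
      (∀ t : Γ, Filter.Tendsto (fun i => w i t) l (nhds (w₀ t))) →
      Filter.Tendsto (fun i => T.rnorm (wact (w i) f - wact w₀ f)) l (nhds 0)) := by
  classical
  intro wact
  have hwact : ∀ ω (f : S → ℂ) σ, wact ω f σ = (ω (cS σ) : ℂ) * f σ := fun _ _ _ => rfl
  -- continuity of the scalar factor
  have hcont_fac : ∀ ω : AddChar Γ Circle, Continuous fun σ : S => ((ω (cS σ) : Circle) : ℂ) := by
    intro ω
    exact continuous_subtype_val.comp ((continuous_of_discreteTopology (f := fun t : Γ => ω t)).comp hcS_cont)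
  refine ⟨?_, ?_, ?_, ?_, ?_, ?_, ?_⟩
  · -- preserves C_c
    rintro ω f ⟨hfc, hfs, hfcov⟩
    refine ⟨(hcont_fac ω).mul hfc, hfs.mul_left, ?_⟩
    intro z σ
    have h1 : cS (T.act z σ) = cS σ := by rw [hcS_q, T.q_act, ← hcS_q]
    rw [hwact, hwact, h1, hfcov]
    ring
  · -- multiplicative
    rintro ω f g hf hg
    funext σ
    show (ω (cS σ) : ℂ) * T.conv f g σ = T.conv (wact ω f) (wact ω g) σ
    rw [TwistData.conv, TwistData.conv, ← tsum_mul_left]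
    apply tsum_congr
    intro η
    have hcomp : T.Sd.src (T.Sd.inv (T.lift η.1)) = T.Sd.rng σ := by
      apply T.q_unit_bij.injOn ⟨_, rfl⟩ ⟨T.Sd.rng σ, T.Sd.src_rng σ⟩
      rw [T.q_src, T.q_inv, T.Gd.src_inv, T.q_lift, η.2, ← T.q_rng]
    have hX : cS (T.Sd.comp (T.Sd.inv (T.lift η.1)) σ) = - cG η.1 + cS σ := by
      rw [hcS_q, T.q_comp _ _ hcomp, T.q_inv, T.q_lift,
        hcG_comp _ _ (by rw [T.Gd.src_inv, η.2]), hcG_inv, ← hcS_q]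
    have hlift : cS (T.lift η.1) = cG η.1 := by rw [hcS_q, T.q_lift]
    rw [hwact, hwact, hlift, hX]
    have hkey : (ω (cG η.1) : ℂ) * (ω (- cG η.1 + cS σ) : ℂ) = (ω (cS σ) : ℂ) := by
      rw [← Circle.coe_mul, ← AddChar.map_add_eq_mul, add_neg_cancel_left]
    calc (ω (cS σ) : ℂ) * (f (T.lift η.1) * g (T.Sd.comp (T.Sd.inv (T.lift η.1)) σ))
        = ((ω (cG η.1) : ℂ) * (ω (- cG η.1 + cS σ) : ℂ)) *
            (f (T.lift η.1) * g (T.Sd.comp (T.Sd.inv (T.lift η.1)) σ)) := by rw [hkey]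
      _ = (ω (cG η.1) : ℂ) * f (T.lift η.1) *
            ((ω (- cG η.1 + cS σ) : ℂ) * g (T.Sd.comp (T.Sd.inv (T.lift η.1)) σ)) := by ring
  · -- star
    rintro ω f hf
    funext σ
    show (ω (cS σ) : ℂ) * conj (f (T.Sd.inv σ)) = conj ((ω (cS (T.Sd.inv σ)) : ℂ) * f (T.Sd.inv σ))
    have h1 : cS (T.Sd.inv σ) = - cS σ := by rw [hcS_q, T.q_inv, hcG_inv, ← hcS_q]
    rw [map_mul, h1, AddChar.map_neg_eq_inv, Circle.coe_inv_eq_conj, Complex.conj_conj]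
  · -- identity
    intro f
    funext σ
    show ((1 : AddChar Γ Circle) (cS σ) : ℂ) * f σ = f σ
    rw [AddChar.one_apply, Circle.coe_one, one_mul]
  · -- multiplicativity of the action
    intro ω₁ ω₂ f
    funext σ
    show ((ω₁ * ω₂) (cS σ) : ℂ) * f σ = (ω₁ (cS σ) : ℂ) * ((ω₂ (cS σ) : ℂ) * f σ)
    rw [AddChar.mul_apply, Circle.coe_mul, mul_assoc]
  · -- isometry
    intro ω f _hf
    have main : ∀ x : G,
        (⨆ χ : {g : G // T.Gd.src g = x} → ℂ,
          ⨆ _ : (Function.support χ).Finite ∧ T.l2norm x χ ≤ 1,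
            T.l2norm x (T.pix x (wact ω f) χ)) =
        (⨆ χ : {g : G // T.Gd.src g = x} → ℂ,
          ⨆ _ : (Function.support χ).Finite ∧ T.l2norm x χ ≤ 1,
            T.l2norm x (T.pix x f χ)) := by
      intro x
      set V : ({g : G // T.Gd.src g = x} → ℂ) → ({g : G // T.Gd.src g = x} → ℂ) :=
        fun χ η => ((ω (- cG η.1) : Circle) : ℂ) * χ η with hV
      have hVsurj : Function.Surjective V := by
        intro χ
        refine ⟨fun η => ((ω (cG η.1) : Circle) : ℂ) * χ η, ?_⟩
        funext η
        show (ω (- cG η.1) : ℂ) * ((ω (cG η.1) : ℂ) * χ η) = χ η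
        rw [← mul_assoc, ← Circle.coe_mul, ← AddChar.map_add_eq_mul, neg_add_cancel,
          AddChar.map_zero_eq_one, Circle.coe_one, one_mul]
      have hPV : ∀ χ : {g : G // T.Gd.src g = x} → ℂ,
          ((Function.support (V χ)).Finite ∧ T.l2norm x (V χ) ≤ 1) ↔
          ((Function.support χ).Finite ∧ T.l2norm x χ ≤ 1) := by
        intro χ
        have hsupp : Function.support (V χ) = Function.support χ := by
          ext η
          simp [hV, Function.mem_support]
        have hl2 : T.l2norm x (V χ) = T.l2norm x χ := by
          show Real.sqrt _ = Real.sqrt _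
          congr 1
          apply tsum_congr
          intro η
          show ‖(ω (- cG η.1) : ℂ) * χ η‖ ^ 2 = ‖χ η‖ ^ 2
          rw [norm_mul]
          simp [Circle.norm_coe]
        rw [hsupp, hl2]
      have hpixval : ∀ (χ : {g : G // T.Gd.src g = x} → ℂ) (γ : {g : G // T.Gd.src g = x}),
          T.pix x (wact ω f) χ γ = (ω (cG γ.1) : ℂ) * T.pix x f (V χ) γ := by
        intro χ γ
        rw [TwistData.pix, TwistData.pix, ← tsum_mul_left]
        apply tsum_congr
        intro η
        have hm : cS (T.lift (T.Gd.comp γ.1 (T.Gd.inv η.1))) = cG γ.1 + - cG η.1 := by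
          rw [hcS_q, T.q_lift, hcG_comp _ _ (by rw [γ.2, T.Gd.rng_inv, η.2]), hcG_inv]
        rw [hwact, hm]
        have hsplit : (ω (cG γ.1 + - cG η.1) : ℂ) = (ω (cG γ.1) : ℂ) * (ω (- cG η.1) : ℂ) := by
          rw [← Circle.coe_mul, AddChar.map_add_eq_mul]
        rw [hsplit]
        show _ = (ω (cG γ.1) : ℂ) * (f (T.lift (T.Gd.comp γ.1 (T.Gd.inv η.1))) *
          (T.cocyc (T.Gd.comp γ.1 (T.Gd.inv η.1)) η.1 : ℂ) * ((ω (- cG η.1) : ℂ) * χ η))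
        ring
      have hl2pix : ∀ χ : {g : G // T.Gd.src g = x} → ℂ,
          T.l2norm x (T.pix x (wact ω f) χ) = T.l2norm x (T.pix x f (V χ)) := by
        intro χ
        show Real.sqrt _ = Real.sqrt _
        congr 1
        apply tsum_congr
        intro γ
        rw [hpixval χ γ, norm_mul]
        simp [Circle.norm_coe]
      have hfun : (fun χ : {g : G // T.Gd.src g = x} → ℂ =>
          ⨆ _ : (Function.support χ).Finite ∧ T.l2norm x χ ≤ 1,
            T.l2norm x (T.pix x (wact ω f) χ)) =
          (fun χ : {g : G // T.Gd.src g = x} → ℂ =>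
            ⨆ _ : (Function.support (V χ)).Finite ∧ T.l2norm x (V χ) ≤ 1,
              T.l2norm x (T.pix x f (V χ))) := by
        funext χ
        rw [hl2pix χ, propext (hPV χ)]
      rw [iSup_congr (fun χ => congrFun hfun χ)]
      exact hVsurj.iSup_comp fun χ' =>
        ⨆ _ : (Function.support χ').Finite ∧ T.l2norm x χ' ≤ 1, T.l2norm x (T.pix x f χ')
    rw [TwistData.rnorm, TwistData.rnorm]
    exact iSup_congr fun x => congrArg (fun v => ⨆ _ : x ∈ T.Gd.units, v) (main x)
  · -- strong continuity
    rintro f ⟨hfc, hfs, _⟩ ι l w w₀ hw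
    obtain ⟨C, hC⟩ := hfc.bounded_above_of_compact_support hfs
    set Mf : ℝ := max C 0 with hMf
    have hMf0 : 0 ≤ Mf := le_max_right _ _
    have hMfb : ∀ σ, ‖f σ‖ ≤ Mf := fun σ => (hC σ).trans (le_max_left _ _)
    have hFfin : (cS '' tsupport f).Finite := (hfs.image hcS_cont).finite_of_discrete
    set F : Finset Γ := hFfin.toFinset with hF
    obtain ⟨n, hn⟩ := T.rnorm_le_of_bound hetale f hfs
    set s : ι → ℝ := fun i => ∑ t ∈ F, ‖(w i t : ℂ) - (w₀ t : ℂ)‖ with hs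
    have hs0 : ∀ i, 0 ≤ s i := fun i => Finset.sum_nonneg fun _ _ => norm_nonneg _
    have hdiff : ∀ i σ, (wact (w i) f - wact w₀ f) σ =
        ((w i (cS σ) : ℂ) - (w₀ (cS σ) : ℂ)) * f σ := by
      intro i σ
      show wact (w i) f σ - wact w₀ f σ = _
      rw [hwact, hwact]
      ring
    have hbound : ∀ i, T.rnorm (wact (w i) f - wact w₀ f) ≤ (n : ℝ) * (Mf * s i) := by
      intro i
      refine hn _ (Mf * s i) (mul_nonneg hMf0 (hs0 i)) ?_ ?_
      · intro σ
        rw [hdiff i σ, norm_mul]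
        by_cases hσ : f σ = 0
        · rw [hσ, norm_zero, mul_zero]
          exact mul_nonneg hMf0 (hs0 i)
        · have hmem : cS σ ∈ F := hFfin.mem_toFinset.2 ⟨σ, subset_tsupport f hσ, rfl⟩
          have h1 : ‖(w i (cS σ) : ℂ) - (w₀ (cS σ) : ℂ)‖ ≤ s i :=
            Finset.single_le_sum (f := fun t => ‖(w i t : ℂ) - (w₀ t : ℂ)‖)
              (fun t _ => norm_nonneg _) hmem
          calc ‖(w i (cS σ) : ℂ) - (w₀ (cS σ) : ℂ)‖ * ‖f σ‖
              ≤ s i * Mf := mul_le_mul h1 (hMfb σ) (norm_nonneg _) (hs0 i)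
            _ = Mf * s i := mul_comm _ _
      · intro σ hσ
        apply subset_tsupport f
        intro h0
        apply hσ
        show (wact (w i) f - wact w₀ f) σ = 0
        rw [hdiff i σ, h0, mul_zero]
    have hs_tend : Filter.Tendsto s l (nhds 0) := by
      have hterm : ∀ t ∈ F, Filter.Tendsto (fun i => ‖(w i t : ℂ) - (w₀ t : ℂ)‖) l (nhds 0) := by
        intro t _
        have h1 : Filter.Tendsto (fun i => (w i t : ℂ)) l (nhds ((w₀ t : ℂ))) :=
          (continuous_subtype_val.tendsto _).comp (hw t)
        have h2 := (h1.sub (tendsto_const_nhds (x := (w₀ t : ℂ)))).norm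
        simpa using h2
      have := tendsto_finset_sum F hterm
      simpa using this
    have hfin : Filter.Tendsto (fun i => (n : ℝ) * (Mf * s i)) l (nhds 0) := by
      have := (hs_tend.const_mul Mf).const_mul (n : ℝ)
      simpa using this
    exact squeeze_zero (fun i => T.rnorm_nonneg _) hbound hfin
end
end

section
/- Let Σ → G be a Γ-graded twist over an étale groupoid G (Γ discrete abelian), and let R = c_G⁻¹(0), 𝒫 = c_Σ⁻¹(0). Then the image of C*_r(𝒫;R) under the extension-by-zero embedding into C*_r(Σ;G) equals the fixed-point algebra C*_r(Σ;G)^Γ̂ of the induced Γ̂-action. -/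
open scoped ComplexConjugate
open Filter Topology

noncomputable section

lemma coe_circle_pow (z : Circle) (k : ℕ) : ((z ^ k : Circle) : ℂ) = (z : ℂ) ^ k :=
  map_pow Circle.coeHom z k

/-- For every nonzero `γ` in an abelian group `Γ` there is a circle-valued character `ω`
whose value at `γ` is a nontrivial root of unity; in particular some geometric sum vanishes. -/
lemma exists_char_sum_zero {Γ : Type*} [AddCommGroup Γ] {γ : Γ} (hγ : γ ≠ 0) :
    ∃ (ω : AddChar Γ Circle) (n : ℕ), 0 < n ∧
      ∑ k ∈ Finset.range n, ((ω γ : ℂ)) ^ k = 0 := by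
  obtain ⟨c, hc⟩ := CharacterModule.exists_character_apply_ne_zero_of_ne_zero hγ
  -- the exponential homomorphism `ℚ → Circle`, additively
  have exp_hom : ∀ a b : ℝ, Circle.exp (a + b) = Circle.exp a * Circle.exp b :=
    Circle.exp_add
  let qexp : ℚ →+ Additive Circle :=
    AddMonoidHom.mk' (fun q => Additive.ofMul (Circle.exp (2 * Real.pi * (q : ℝ))))
      (by
        intro a b
        show Additive.ofMul (Circle.exp _) = Additive.ofMul (Circle.exp _ * Circle.exp _)
        rw [← Circle.exp_add]
        congr 1
        push_cast
        ring)
  have hker : ∀ x ∈ AddSubgroup.zmultiples (1 : ℚ), qexp x = 0 := by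
    intro x hx
    obtain ⟨k, hk⟩ := AddSubgroup.mem_zmultiples_iff.mp hx
    have hxk : x = (k : ℚ) := by rw [← hk]; simp
    subst hxk
    show Additive.ofMul (Circle.exp (2 * Real.pi * ((k : ℚ) : ℝ))) = 0
    have : ((k : ℚ) : ℝ) = (k : ℝ) := by push_cast; ring
    rw [this, Circle.exp_two_pi_mul_int]
    rfl
  let e : AddCircle (1 : ℚ) →+ Additive Circle :=
    QuotientAddGroup.lift (AddSubgroup.zmultiples (1 : ℚ)) qexp hker
  -- the character
  let ω : AddChar Γ Circle :=
    { toFun := fun δ => (e (c δ)).toMul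
      map_zero_eq_one' := by
        show Additive.toMul (e (c 0)) = 1
        rw [map_zero c, map_zero]
        rfl
      map_add_eq_mul' := by
        intro a b
        show Additive.toMul (e (c (a + b))) =
          Additive.toMul (e (c a)) * Additive.toMul (e (c b))
        rw [map_add c, map_add]
        rfl }
  -- representative of `c γ`
  obtain ⟨q, hq⟩ := QuotientAddGroup.mk_surjective (c γ)
  have hmk : ((q : ℚ) : AddCircle (1 : ℚ)) = c γ := hq
  have heval : ω γ = Circle.exp (2 * Real.pi * (q : ℝ)) := by
    show (e (c γ)).toMul = _
    rw [← hmk]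
    rfl
  -- `ω γ ≠ 1`
  have hne : ω γ ≠ 1 := by
    rw [heval]
    intro h1
    obtain ⟨m, hm⟩ := Circle.exp_eq_one.mp h1
    have hπ : (q : ℝ) = (m : ℝ) := by
      have h2π : (2 * Real.pi) ≠ 0 := by positivity
      have : (q : ℝ) * (2 * Real.pi) = (m : ℝ) * (2 * Real.pi) := by linarith [hm]
      exact mul_right_cancel₀ h2π this
    have hqm : q = (m : ℚ) := by
      have := hπ
      exact_mod_cast this
    apply hc
    rw [← hmk, hqm]
    rw [AddCircle.coe_eq_zero_iff]
    exact ⟨m, by simp⟩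
  -- `ω γ` is a root of unity of order dividing `q.den`
  have hexp_pow : ∀ (m : ℕ) (r : ℝ), Circle.exp r ^ m = Circle.exp (m * r) := by
    intro m r
    induction m with
    | zero => simp
    | succ k ih =>
      rw [pow_succ, ih, ← Circle.exp_add]
      congr 1
      push_cast
      ring
  have hden : ((q.den : ℚ) * q : ℚ) = (q.num : ℚ) := by
    rw [mul_comm]
    rw [Rat.mul_den_eq_num]
  have hpow : ω γ ^ q.den = 1 := by
    rw [heval, hexp_pow]
    have : (q.den : ℝ) * (2 * Real.pi * (q : ℝ)) = 2 * Real.pi * ((q.num : ℚ) : ℝ) := by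
      rw [← hden]
      push_cast
      ring
    rw [this]
    have : (((q.num : ℚ)) : ℝ) = (q.num : ℝ) := by push_cast; ring
    rw [this, Circle.exp_two_pi_mul_int]
  have hzC : ((ω γ : ℂ)) ^ q.den = 1 := by
    have h2 : Circle.coeHom (ω γ ^ q.den) = Circle.coeHom 1 := congrArg _ hpow
    rw [map_pow, map_one] at h2
    exact h2
  have hz1 : ((ω γ : ℂ)) ≠ 1 := fun h => hne (Circle.coe_eq_one.mp h)
  refine ⟨ω, q.den, q.den_pos, ?_⟩
  have hg := geom_sum_mul ((ω γ : ℂ)) q.den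
  rw [hzC, sub_self] at hg
  rcases mul_eq_zero.mp hg with h | h
  · exact h
  · exact absurd (sub_eq_zero.mp h) hz1

/-- Let `Σ → G` be a `Γ`-graded twist over an étale groupoid (`Γ` discrete abelian), and let `R = c_G⁻¹(0)`, `𝒫 = c_Σ⁻¹(0)`.  Then the image of `C*_r(𝒫;R)` under the extension-by-zero embedding into `C*_r(Σ;G)` equals the fixed-point algebra `C*_r(Σ;G)^Γ̂` of the induced `Γ̂`-action. -/
theorem twist_stmt18
    {G S : Type*} [TopologicalSpace G] [TopologicalSpace S]
    [T2Space G] [T2Space S] [LocallyCompactSpace G] [LocallyCompactSpace S]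
    (T : TwistData G S) (hetale : T.Gd.IsEtale)
    -- `Γ`-grading cocycles `c_Σ` and `c_G` with `c_Σ = c_G ∘ q`:
    {Γ : Type*} [AddCommGroup Γ] [TopologicalSpace Γ] [DiscreteTopology Γ]
    (cG : G → Γ) (cS : S → Γ)
    (hcG_cont : Continuous cG) (hcS_cont : Continuous cS)
    (hcG_comp : ∀ g h, T.Gd.src g = T.Gd.rng h → cG (T.Gd.comp g h) = cG g + cG h)
    (hcG_inv : ∀ g, cG (T.Gd.inv g) = - cG g)
    (hcS_q : ∀ σ, cS σ = cG (T.q σ))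
    {A : Type*} [NormedRing A] [StarRing A] [CStarRing A] [NormedAlgebra ℂ A]
    [CompleteSpace A] [StarModule ℂ A]
    -- `A` is (a copy of) the reduced C*-algebra `C*_r(Σ;G)`: a C*-algebra containing
    -- `C_c(Σ;G)` isometrically (for the reduced norm) as a dense *-subalgebra:
    (Φ : (S → ℂ) → A)
    (hΦnorm : ∀ f, T.MemCc f → ‖Φ f‖ = T.rnorm f)
    (hΦadd : ∀ f g, T.MemCc f → T.MemCc g → Φ (f + g) = Φ f + Φ g)
    (hΦsmul : ∀ (c : ℂ) f, T.MemCc f → Φ (c • f) = c • Φ f)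
    (hΦmul : ∀ f g, T.MemCc f → T.MemCc g → Φ (T.conv f g) = Φ f * Φ g)
    (hΦstar : ∀ f, T.MemCc f → Φ (T.starF f) = star (Φ f))
    (hΦdense : Dense {a : A | ∃ f, T.MemCc f ∧ Φ f = a})
    -- the induced action of `Γ̂` on `C*_r(Σ;G)`:
    (β : AddChar Γ Circle → A → A)
    (hβadd : ∀ ω a b, β ω (a + b) = β ω a + β ω b)
    (hβsmul : ∀ ω (c : ℂ) a, β ω (c • a) = c • β ω a)
    (hβmul : ∀ ω a b, β ω (a * b) = β ω a * β ω b)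
    (hβstar : ∀ ω a, β ω (star a) = star (β ω a))
    (hβiso : ∀ ω a, ‖β ω a‖ = ‖a‖)
    (hβone : ∀ a, β 1 a = a)
    (hβcomp : ∀ ω₁ ω₂ a, β (ω₁ * ω₂) a = β ω₁ (β ω₂ a))
    (hβΦ : ∀ ω f, T.MemCc f → β ω (Φ f) = Φ (fun σ => ((ω (cS σ) : ℂ)) * f σ))
 :
    {a : A | ∀ ω : AddChar Γ Circle, β ω a = a} =
      closure {a : A | ∃ f, T.MemCc f ∧ (∀ σ : S, cG (T.q σ) ≠ 0 → f σ = 0) ∧ Φ f = a} := by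
  classical
  -- basic properties of β
  have hβzero : ∀ ω : AddChar Γ Circle, β ω 0 = 0 := by
    intro ω
    have h := hβsmul ω 0 0
    simpa using h
  have hβsub : ∀ (ω : AddChar Γ Circle) (a b : A), β ω (a - b) = β ω a - β ω b := by
    intro ω a b
    have hneg : β ω (-b) = -β ω b := by
      have h := hβsmul ω (-1) b
      simpa [neg_one_smul] using h
    rw [sub_eq_add_neg, hβadd, hneg, sub_eq_add_neg]
  have hβsumℕ : ∀ (ω : AddChar Γ Circle) (n : ℕ) (v : ℕ → A),
      β ω (∑ k ∈ Finset.range n, v k) = ∑ k ∈ Finset.range n, β ω (v k) := by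
    intro ω n v
    induction n with
    | zero => simpa using hβzero ω
    | succ m ih => rw [Finset.sum_range_succ, Finset.sum_range_succ, hβadd, ih]
  -- basic properties of MemCc and Φ
  have memCc_zero : T.MemCc 0 := by
    refine ⟨continuous_const, ?_, ?_⟩
    · rw [HasCompactSupport, tsupport, Function.support_zero, closure_empty]
      exact isCompact_empty
    · intro z σ; simp
  have memCc_add : ∀ f g : S → ℂ, T.MemCc f → T.MemCc g → T.MemCc (f + g) := by
    intro f g hf hg
    refine ⟨hf.1.add hg.1, hf.2.1.add hg.2.1, ?_⟩
    intro z σ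
    simp only [Pi.add_apply, hf.2.2 z σ, hg.2.2 z σ]
    ring
  have Φzero : Φ 0 = 0 := by
    have h := hΦsmul 0 0 memCc_zero
    simpa using h
  have memCc_sum : ∀ (F : Finset Γ) (g : Γ → S → ℂ), (∀ γ, T.MemCc (g γ)) →
      T.MemCc (∑ γ ∈ F, g γ) := by
    intro F g hg
    induction F using Finset.induction with
    | empty => simpa using memCc_zero
    | insert _ _ h ih => rw [Finset.sum_insert h]; exact memCc_add _ _ (hg _) ih
  have ΦSum : ∀ (F : Finset Γ) (g : Γ → S → ℂ), (∀ γ, T.MemCc (g γ)) →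
      Φ (∑ γ ∈ F, g γ) = ∑ γ ∈ F, Φ (g γ) := by
    intro F g hg
    induction F using Finset.induction with
    | empty => simpa using Φzero
    | insert _ _ h ih =>
      rw [Finset.sum_insert h, Finset.sum_insert h, hΦadd _ _ (hg _) (memCc_sum _ g hg), ih]
  -- the averaging (conditional-expectation) operators associated to a finite set of
  -- nonzero grades
  have key : ∀ D : Finset Γ, (0 : Γ) ∉ D → ∃ E : A → A,
      (∀ a b, E (a + b) = E a + E b) ∧
      (∀ a, ‖E a‖ ≤ ‖a‖) ∧
      (∀ a, (∀ ω, β ω a = a) → E a = a) ∧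
      (∀ (δ : Γ) (u : A), (∀ ω, β ω u = ((ω δ : ℂ)) • u) →
        (∀ ω, β ω (E u) = ((ω δ : ℂ)) • E u) ∧ (δ ∈ D → E u = 0)) := by
    intro D
    induction D using Finset.induction with
    | empty =>
      intro _
      exact ⟨id, fun _ _ => rfl, fun _ => le_refl _, fun _ _ => rfl,
        fun δ u hu => ⟨hu, fun h => absurd h (Finset.notMem_empty δ)⟩⟩
    | @insert γ D hγD ih =>
      intro h0
      have hγ0 : γ ≠ 0 := fun h => h0 (h ▸ Finset.mem_insert_self γ D)
      have h0D : (0 : Γ) ∉ D := fun h => h0 (Finset.mem_insert_of_mem h)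
      obtain ⟨E, hEadd, hEnorm, hEfix, hEeig⟩ := ih h0D
      obtain ⟨ω, n, hn, hsum⟩ := exists_char_sum_zero hγ0
      have hnC : (n : ℂ) ≠ 0 := Nat.cast_ne_zero.mpr hn.ne'
      have hnR : (n : ℝ) ≠ 0 := Nat.cast_ne_zero.mpr hn.ne'
      refine ⟨fun a => ((n : ℂ)⁻¹) • ∑ k ∈ Finset.range n, β (ω ^ k) (E a), ?_, ?_, ?_, ?_⟩
      · intro a b
        beta_reduce
        rw [hEadd]
        simp only [hβadd]
        rw [Finset.sum_add_distrib, smul_add]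
      · intro a
        beta_reduce
        calc ‖((n : ℂ)⁻¹) • ∑ k ∈ Finset.range n, β (ω ^ k) (E a)‖
            = ‖(n : ℂ)⁻¹‖ * ‖∑ k ∈ Finset.range n, β (ω ^ k) (E a)‖ := norm_smul _ _
          _ ≤ ‖(n : ℂ)⁻¹‖ * ∑ k ∈ Finset.range n, ‖β (ω ^ k) (E a)‖ := by
              gcongr
              exact norm_sum_le _ _
          _ = ‖(n : ℂ)⁻¹‖ * ((n : ℝ) * ‖E a‖) := by
              congr 1
              rw [Finset.sum_congr rfl (fun k _ => hβiso (ω ^ k) (E a)), Finset.sum_const,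
                Finset.card_range, nsmul_eq_mul]
          _ ≤ ‖a‖ := by
              have h1 : ‖(n : ℂ)⁻¹‖ = (n : ℝ)⁻¹ := by simp
              rw [h1, ← mul_assoc, inv_mul_cancel₀ hnR, one_mul]
              exact hEnorm a
      · intro a ha
        beta_reduce
        rw [hEfix a ha]
        have h2 : ∀ k ∈ Finset.range n, β (ω ^ k) a = a := fun k _ => ha _
        rw [Finset.sum_congr rfl h2, Finset.sum_const, Finset.card_range,
          ← Nat.cast_smul_eq_nsmul ℂ, smul_smul, inv_mul_cancel₀ hnC, one_smul]
      · intro δ u hu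
        obtain ⟨heig, hmem⟩ := hEeig δ u hu
        have hval : ∀ k, β (ω ^ k) (E u) = (((ω δ : ℂ)) ^ k) • E u := by
          intro k
          rw [heig (ω ^ k), AddChar.pow_apply, coe_circle_pow]
        constructor
        · intro ω'
          beta_reduce
          rw [hβsmul, hβsumℕ]
          have hcomm : ∀ k ∈ Finset.range n, β ω' (β (ω ^ k) (E u)) =
              ((ω' δ : ℂ)) • β (ω ^ k) (E u) := by
            intro k _
            rw [← hβcomp, mul_comm, hβcomp, heig ω', hβsmul]
          rw [Finset.sum_congr rfl hcomm, ← Finset.smul_sum, smul_comm]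
        · intro hδ
          beta_reduce
          rcases Finset.mem_insert.mp hδ with h | h
          · subst h
            have h3 : ∑ k ∈ Finset.range n, β (ω ^ k) (E u)
                = (∑ k ∈ Finset.range n, ((ω δ : ℂ)) ^ k) • E u := by
              rw [Finset.sum_smul]
              exact Finset.sum_congr rfl fun k _ => hval k
            rw [h3, hsum, zero_smul, smul_zero]
          · rw [hmem h]
            simp [hβzero]
  -- now the set equality
  apply Set.eq_of_subset_of_subset
  · -- fixed points ⊆ closure of the image of `C*_r(𝒫;R)`
    intro a ha
    rw [Metric.mem_closure_iff]
    intro ε hε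
    obtain ⟨b, hball, hbset⟩ := (Metric.dense_iff.mp hΦdense) a ε hε
    obtain ⟨f, hf, rfl⟩ := hbset
    -- decompose `f` according to the (finitely many) grades met by its support
    have hfin : (cS '' tsupport f).Finite := (hf.2.1.image hcS_cont).finite_of_discrete
    set F : Finset Γ := insert (0 : Γ) hfin.toFinset with hF
    have h0F : (0 : Γ) ∈ F := Finset.mem_insert_self _ _
    have hmemF : ∀ σ, f σ ≠ 0 → cS σ ∈ F := by
      intro σ hσ
      apply Finset.mem_insert_of_mem
      rw [Set.Finite.mem_toFinset]
      exact ⟨σ, subset_tsupport f hσ, rfl⟩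
    set g : Γ → S → ℂ := fun γ σ => if cS σ = γ then f σ else 0 with hg
    have hclopen : ∀ γ : Γ, IsClopen {σ : S | cS σ = γ} := fun γ =>
      (isClopen_discrete {γ}).preimage hcS_cont
    have hgmem : ∀ γ, T.MemCc (g γ) := by
      intro γ
      refine ⟨?_, ?_, ?_⟩
      · simp only [hg]
        apply Continuous.if ?_ hf.1 continuous_const
        intro σ hσ
        rw [(hclopen γ).frontier_eq] at hσ
        exact absurd hσ (Set.notMem_empty σ)
      · apply hf.2.1.mono
        intro σ hσ
        simp only [Function.mem_support, hg] at hσ ⊢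
        intro h
        apply hσ
        split_ifs <;> simp [h]
      · intro z σ
        have hact : cS (T.act z σ) = cS σ := by
          rw [hcS_q, hcS_q, T.q_act]
        simp only [hg, hact]
        split_ifs with h
        · exact hf.2.2 z σ
        · ring
    have hdecomp : f = ∑ γ ∈ F, g γ := by
      funext σ
      rw [Finset.sum_apply]
      by_cases hσ : f σ = 0
      · rw [hσ]
        refine (Finset.sum_eq_zero ?_).symm
        intro γ _
        simp only [hg]
        split_ifs <;> simp [hσ]
      · rw [Finset.sum_eq_single_of_mem (cS σ) (hmemF σ hσ)
          (fun γ _ hne => by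
            simp only [hg]
            exact if_neg (fun h => hne h.symm))]
        simp [hg]
    have heigen : ∀ (γ : Γ) (ω : AddChar Γ Circle),
        β ω (Φ (g γ)) = ((ω γ : ℂ)) • Φ (g γ) := by
      intro γ ω
      rw [hβΦ ω (g γ) (hgmem γ), ← hΦsmul _ _ (hgmem γ)]
      congr 1
      funext σ
      simp only [hg, Pi.smul_apply, smul_eq_mul]
      split_ifs with h
      · rw [h]
      · ring
    obtain ⟨E, hEadd, hEnorm, hEfix, hEeig⟩ := key (F.erase 0) (Finset.notMem_erase 0 F)
    have hE0 : E 0 = 0 := by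
      have h := (hEadd 0 0).symm
      rw [add_zero] at h
      exact (add_eq_left.mp h)
    have hEsub : ∀ x y, E (x - y) = E x - E y := by
      intro x y
      have h := hEadd y (x - y)
      rw [show y + (x - y) = x by abel] at h
      rw [eq_sub_iff_add_eq, add_comm]
      exact h.symm
    have hEsum : E (Φ f) = Φ (g 0) := by
      have h1 : Φ f = ∑ γ ∈ F, Φ (g γ) := by
        conv_lhs => rw [hdecomp]
        exact ΦSum F g hgmem
      have hEfinsum : ∀ F' : Finset Γ,
          E (∑ γ ∈ F', Φ (g γ)) = ∑ γ ∈ F', E (Φ (g γ)) := by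
        intro F'
        induction F' using Finset.induction with
        | empty => simpa using hE0
        | insert _ _ h ih => rw [Finset.sum_insert h, Finset.sum_insert h, hEadd, ih]
      rw [h1, hEfinsum,
        Finset.sum_eq_single_of_mem 0 h0F
          (fun γ hγF hγ0 =>
            (hEeig γ (Φ (g γ)) (heigen γ)).2 (Finset.mem_erase.mpr ⟨hγ0, hγF⟩))]
      apply hEfix
      intro ω
      rw [heigen 0 ω]
      simp
    refine ⟨Φ (g 0), ⟨g 0, hgmem 0, ?_, rfl⟩, ?_⟩
    · intro σ hσ
      simp only [hg]
      apply if_neg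
      rw [hcS_q]
      exact hσ
    · have h2 : a - Φ (g 0) = E a - E (Φ f) := by rw [hEfix a ha, hEsum]
      have h3 : ‖a - Φ (g 0)‖ ≤ ‖a - Φ f‖ := by
        rw [h2, ← hEsub]
        exact hEnorm _
      rw [dist_eq_norm]
      refine lt_of_le_of_lt h3 ?_
      have h4 := hball
      rw [Metric.mem_ball, dist_eq_norm] at h4
      rw [norm_sub_rev]
      exact h4
  · -- closure ⊆ fixed points
    intro a ha ω
    have hcont : Continuous (β ω) := by
      have hiso : Isometry (β ω) := Isometry.of_dist_eq (fun x y => by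
        rw [dist_eq_norm, dist_eq_norm, ← hβsub ω x y]
        exact hβiso ω (x - y))
      exact hiso.continuous
    have hclosed : IsClosed {x : A | β ω x = x} := isClosed_eq hcont continuous_id
    have hsub : {x : A | ∃ f, T.MemCc f ∧ (∀ σ : S, cG (T.q σ) ≠ 0 → f σ = 0) ∧ Φ f = x} ⊆
        {x : A | β ω x = x} := by
      rintro x ⟨f, hf, hvan, rfl⟩
      show β ω (Φ f) = Φ f
      rw [hβΦ ω f hf]
      congr 1
      funext σ
      by_cases h : cG (T.q σ) = 0
      · rw [hcS_q, h]
        simp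
      · rw [hvan σ h, mul_zero]
    exact hclosed.closure_subset_iff.mpr hsub ha
end
end
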